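/- Main theorem, case H3 ⊆ E3: for events E1, H1, E2, H2, E3, H3 with P(Hi) > 0 for i = 1, 2, 3, if H3 ⊆ E3, then the triple conjunction satisfies C3(ω) = C12(ω) for every ω ∈ Ω (where C12 := ⟦(E1|H1)∧(E2|H2)⟧) and x123 = x12; consequently, if x12 > 0, the iterated conditional satisfies ⟦(E3|H3)|((E1|H1)∧(E2|H2))⟧(ω) = 1 for every ω ∈ Ω. -/

import Mathlib

open MeasureTheory Set
open scoped Classical

noncomputable section

variable {Ω : Type*} [MeasurableSpace Ω]

/-- Indicator (with values in `ℝ`) of a set. -/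
def ind (A : Set Ω) : Ω → ℝ := A.indicator 1

/-- Conditional probability `P(A|H) = P(A ∩ H)/P(H)`. -/
def condProb (P : Measure Ω) (A H : Set Ω) : ℝ :=
  (P (A ∩ H)).toReal / (P H).toReal

/-- The (indicator of the) conditional event `A|H`,
`⟦A|H⟧ = 1_{A∩H} + P(A|H)·1_{Hᶜ}`. -/
def condEvent (P : Measure Ω) (A H : Set Ω) : Ω → ℝ :=
  fun ω => ind (A ∩ H) ω + condProb P A H * ind Hᶜ ω

/-- The prevision `z` of the conjunction `(A|H) ∧ (B|K)`:
`z = E[min(⟦A|H⟧, ⟦B|K⟧)·1_{H∪K}]/P(H∪K)`. -/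
def conjPrev (P : Measure Ω) (A H B K : Set Ω) : ℝ :=
  (∫ ω, min (condEvent P A H ω) (condEvent P B K ω) * ind (H ∪ K) ω ∂P) /
    (P (H ∪ K)).toReal

/-- The conjunction `⟦(A|H) ∧ (B|K)⟧ = min(⟦A|H⟧, ⟦B|K⟧)·1_{H∪K} + z·1_{(H∪K)ᶜ}`. -/
def conjCE (P : Measure Ω) (A H B K : Set Ω) : Ω → ℝ :=
  fun ω => min (condEvent P A H ω) (condEvent P B K ω) * ind (H ∪ K) ω
    + conjPrev P A H B K * ind (H ∪ K)ᶜ ω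

/-- The iterated conditional `⟦(B|K)|(A|H)⟧ = ⟦(A|H)∧(B|K)⟧ + μ·(1 − ⟦A|H⟧)`,
with `μ = z / P(A|H)`. -/
def iterCond (P : Measure Ω) (A H B K : Set Ω) : Ω → ℝ :=
  fun ω => conjCE P A H B K ω +
    (conjPrev P A H B K / condProb P A H) * (1 - condEvent P A H ω)

/-- Goodman–Nguyen logical implication between conditional events:
`A|H ⊑ B|K` iff `A∩H ⊆ B∩K` and `Bᶜ∩K ⊆ Aᶜ∩H`. -/
def GNle (A H B K : Set Ω) : Prop := A ∩ H ⊆ B ∩ K ∧ Bᶜ ∩ K ⊆ Aᶜ ∩ H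

/-- Triple conjunction `⟦(E1|H1)∧(E2|H2)∧(E3|H3)⟧`, defined piecewise, except that
on `H1ᶜ∩H2ᶜ∩H3ᶜ` it is set to `0` (it is irrelevant there for computing `x123`). -/
def c3base (P : Measure Ω) (E1 H1 E2 H2 E3 H3 : Set Ω) : Ω → ℝ := fun ω =>
  if ω ∈ E1 ∩ H1 ∩ (E2 ∩ H2) ∩ (E3 ∩ H3) then 1
  else if ω ∈ (E1ᶜ ∩ H1) ∪ (E2ᶜ ∩ H2) ∪ (E3ᶜ ∩ H3) then 0
  else if ω ∈ H1ᶜ ∩ (E2 ∩ H2) ∩ (E3 ∩ H3) then condProb P E1 H1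
  else if ω ∈ H2ᶜ ∩ (E1 ∩ H1) ∩ (E3 ∩ H3) then condProb P E2 H2
  else if ω ∈ H3ᶜ ∩ (E1 ∩ H1) ∩ (E2 ∩ H2) then condProb P E3 H3
  else if ω ∈ H1ᶜ ∩ H2ᶜ ∩ (E3 ∩ H3) then conjPrev P E1 H1 E2 H2
  else if ω ∈ H1ᶜ ∩ H3ᶜ ∩ (E2 ∩ H2) then conjPrev P E1 H1 E3 H3
  else if ω ∈ H2ᶜ ∩ H3ᶜ ∩ (E1 ∩ H1) then conjPrev P E2 H2 E3 H3
  else 0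

/-- The prevision `x123 = E[C3·1_{H1∪H2∪H3}]/P(H1∪H2∪H3)` of the triple conjunction. -/
def x123 (P : Measure Ω) (E1 H1 E2 H2 E3 H3 : Set Ω) : ℝ :=
  (∫ ω, c3base P E1 H1 E2 H2 E3 H3 ω * ind (H1 ∪ H2 ∪ H3) ω ∂P) /
    (P (H1 ∪ H2 ∪ H3)).toReal

/-- The triple conjunction `C3 = ⟦(E1|H1)∧(E2|H2)∧(E3|H3)⟧`, equal to `x123` on
`H1ᶜ∩H2ᶜ∩H3ᶜ` and given piecewise by `c3base` elsewhere. -/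
def c3 (P : Measure Ω) (E1 H1 E2 H2 E3 H3 : Set Ω) : Ω → ℝ := fun ω =>
  if ω ∈ H1ᶜ ∩ H2ᶜ ∩ H3ᶜ then x123 P E1 H1 E2 H2 E3 H3
  else c3base P E1 H1 E2 H2 E3 H3 ω

/-- The iterated conditional `⟦(E3|H3)|((E1|H1)∧(E2|H2))⟧ = C3 + μ·(1 − C12)`,
where `μ = x123/x12` and `C12 = ⟦(E1|H1)∧(E2|H2)⟧`. -/
def iter3 (P : Measure Ω) (E1 H1 E2 H2 E3 H3 : Set Ω) : Ω → ℝ := fun ω =>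
  c3 P E1 H1 E2 H2 E3 H3 ω +
    (x123 P E1 H1 E2 H2 E3 H3 / conjPrev P E1 H1 E2 H2) *
      (1 - conjCE P E1 H1 E2 H2 ω)


section Aux

variable (P : Measure Ω)

lemma ind_mem {S : Set Ω} {ω : Ω} (h : ω ∈ S) : ind S ω = 1 := by
  simp [ind, Set.indicator_of_mem h]

lemma ind_nmem {S : Set Ω} {ω : Ω} (h : ω ∉ S) : ind S ω = 0 := by
  simp [ind, Set.indicator_of_notMem h]

lemma condProb_nonneg (A H : Set Ω) : 0 ≤ condProb P A H :=
  div_nonneg ENNReal.toReal_nonneg ENNReal.toReal_nonneg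

lemma condProb_le_one [IsFiniteMeasure P] (A H : Set Ω) : condProb P A H ≤ 1 := by
  unfold condProb
  rcases eq_or_lt_of_le (ENNReal.toReal_nonneg (a := P H)) with h | h
  · simp [← h]
  · rw [div_le_one h]
    exact ENNReal.toReal_mono (measure_ne_top _ _) (measure_mono inter_subset_right)

lemma ce_pos {A H : Set Ω} {ω : Ω} (hA : ω ∈ A) (hH : ω ∈ H) :
    condEvent P A H ω = 1 := by
  simp [condEvent, ind_mem (mem_inter hA hH), ind_nmem (show ω ∉ Hᶜ by simp [hH])]

lemma ce_neg {A H : Set Ω} {ω : Ω} (hA : ω ∉ A) (hH : ω ∈ H) :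
    condEvent P A H ω = 0 := by
  simp [condEvent, ind_nmem (show ω ∉ A ∩ H from fun h => hA h.1),
    ind_nmem (show ω ∉ Hᶜ by simp [hH])]

lemma ce_out {A H : Set Ω} {ω : Ω} (hH : ω ∉ H) :
    condEvent P A H ω = condProb P A H := by
  simp [condEvent, ind_nmem (show ω ∉ A ∩ H from fun h => hH h.2),
    ind_mem (show ω ∈ Hᶜ from hH)]

lemma ce_nonneg (A H : Set Ω) (ω : Ω) : 0 ≤ condEvent P A H ω := by
  by_cases hH : ω ∈ H
  · by_cases hA : ω ∈ A
    · rw [ce_pos P hA hH]; norm_num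
    · rw [ce_neg P hA hH]
  · rw [ce_out P hH]; exact condProb_nonneg P A H

lemma ce_le_one [IsFiniteMeasure P] (A H : Set Ω) (ω : Ω) : condEvent P A H ω ≤ 1 := by
  by_cases hH : ω ∈ H
  · by_cases hA : ω ∈ A
    · rw [ce_pos P hA hH]
    · rw [ce_neg P hA hH]; norm_num
  · rw [ce_out P hH]; exact condProb_le_one P A H

lemma condProb_of_subset [IsFiniteMeasure P] {E3 H3 : Set Ω} (hsub : H3 ⊆ E3)
    (h3 : 0 < P H3) : condProb P E3 H3 = 1 := by
  unfold condProb
  rw [inter_eq_right.mpr hsub]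
  exact div_self (ENNReal.toReal_ne_zero.mpr ⟨h3.ne', measure_ne_top _ _⟩)

lemma ce_of_subset [IsFiniteMeasure P] {E3 H3 : Set Ω} (hsub : H3 ⊆ E3)
    (h3 : 0 < P H3) (ω : Ω) : condEvent P E3 H3 ω = 1 := by
  by_cases h : ω ∈ H3
  · exact ce_pos P (hsub h) h
  · rw [ce_out P h, condProb_of_subset P hsub h3]

lemma integrable_ind [IsFiniteMeasure P] {S : Set Ω} (hS : MeasurableSet S) :
    Integrable (ind S) P := by
  have : Integrable (S.indicator fun _ => (1 : ℝ)) P := (integrable_const 1).indicator hS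
  exact this

lemma integral_ind [IsFiniteMeasure P] {S : Set Ω} (hS : MeasurableSet S) :
    ∫ ω, ind S ω ∂P = (P S).toReal := by
  exact integral_indicator_one (μ := P) hS

lemma integrable_ce [IsFiniteMeasure P] {A H : Set Ω} (hA : MeasurableSet A)
    (hH : MeasurableSet H) : Integrable (condEvent P A H) P := by
  have h1 := integrable_ind P (hA.inter hH)
  have h2 := (integrable_ind P hH.compl).const_mul (condProb P A H)
  exact h1.add h2

lemma integral_ce_mul_ind [IsProbabilityMeasure P] {A H K : Set Ω}
    (hA : MeasurableSet A) (hH : MeasurableSet H) (hK : MeasurableSet K)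
    (hHpos : 0 < P H) :
    ∫ ω, condEvent P A H ω * ind (H ∪ K) ω ∂P
      = condProb P A H * (P (H ∪ K)).toReal := by
  have hHne : (P H).toReal ≠ 0 := ENNReal.toReal_ne_zero.mpr ⟨hHpos.ne', measure_ne_top _ _⟩
  have heq : (fun ω => condEvent P A H ω * ind (H ∪ K) ω)
      = fun ω => ind (A ∩ H) ω + condProb P A H * ind (K \ H) ω := by
    funext ω
    by_cases hHω : ω ∈ H
    · have hu : ω ∈ H ∪ K := Or.inl hHω
      have hd : ω ∉ K \ H := fun h => h.2 hHω
      by_cases hAω : ω ∈ A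
      · rw [ce_pos P hAω hHω, ind_mem hu, ind_mem (mem_inter hAω hHω), ind_nmem hd]; ring
      · rw [ce_neg P hAω hHω, ind_nmem (show ω ∉ A ∩ H from fun h => hAω h.1),
          ind_nmem hd]; ring
    · have hi : ω ∉ A ∩ H := fun h => hHω h.2
      by_cases hKω : ω ∈ K
      · rw [ce_out P hHω, ind_mem (show ω ∈ H ∪ K from Or.inr hKω), ind_nmem hi,
          ind_mem (show ω ∈ K \ H from ⟨hKω, hHω⟩)]; ring
      · rw [ce_out P hHω, ind_nmem (show ω ∉ H ∪ K from fun h => h.elim hHω hKω),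
          ind_nmem hi, ind_nmem (show ω ∉ K \ H from fun h => hKω h.1)]; ring
  rw [heq, integral_add (integrable_ind P (hA.inter hH))
      ((integrable_ind P (hK.diff hH)).const_mul _),
    integral_ind P (hA.inter hH), integral_const_mul, integral_ind P (hK.diff hH)]
  have hsplit : P (H ∪ K) = P H + P (K \ H) := by
    rw [← union_diff_self, measure_union disjoint_sdiff_right (hK.diff hH)]
  have hmul : condProb P A H * (P H).toReal = (P (A ∩ H)).toReal := by
    unfold condProb; field_simp
  rw [hsplit, ENNReal.toReal_add (measure_ne_top _ _) (measure_ne_top _ _), mul_add, hmul]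

lemma conjPrev_subset [IsProbabilityMeasure P] {A H E3 H3 : Set Ω}
    (hA : MeasurableSet A) (hH : MeasurableSet H) (hHpos : 0 < P H)
    (hH3 : MeasurableSet H3) (h3 : 0 < P H3) (hsub : H3 ⊆ E3) :
    conjPrev P A H E3 H3 = condProb P A H := by
  unfold conjPrev
  have hmin : (fun ω => min (condEvent P A H ω) (condEvent P E3 H3 ω) * ind (H ∪ H3) ω)
      = fun ω => condEvent P A H ω * ind (H ∪ H3) ω := by
    funext ω
    rw [ce_of_subset P hsub h3, min_eq_left (ce_le_one P A H ω)]
  rw [hmin, integral_ce_mul_ind P hA hH hH3 hHpos]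
  have hne : (P (H ∪ H3)).toReal ≠ 0 := ENNReal.toReal_ne_zero.mpr
    ⟨(lt_of_lt_of_le hHpos (measure_mono subset_union_left)).ne', measure_ne_top _ _⟩
  rw [mul_div_assoc, div_self hne, mul_one]

lemma c3base_eq_conjCE [IsProbabilityMeasure P] {E1 H1 E2 H2 E3 H3 : Set Ω}
    (hE1 : MeasurableSet E1) (hH1 : MeasurableSet H1)
    (hE2 : MeasurableSet E2) (hH2 : MeasurableSet H2)
    (hE3 : MeasurableSet E3) (hH3 : MeasurableSet H3)
    (h1 : 0 < P H1) (h2 : 0 < P H2) (h3 : 0 < P H3) (hsub : H3 ⊆ E3)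
    {ω : Ω} (hω : ω ∈ H1 ∨ ω ∈ H2 ∨ ω ∈ H3) :
    c3base P E1 H1 E2 H2 E3 H3 ω = conjCE P E1 H1 E2 H2 ω := by
  have hEH3 : E3 ∩ H3 = H3 := inter_eq_right.mpr hsub
  have hEc3 : E3ᶜ ∩ H3 = (∅ : Set Ω) :=
    eq_empty_iff_forall_notMem.mpr fun x hx => hx.1 (hsub hx.2)
  have hc1 : conjPrev P E1 H1 E3 H3 = condProb P E1 H1 :=
    conjPrev_subset P hE1 hH1 h1 hH3 h3 hsub
  have hc2 : conjPrev P E2 H2 E3 H3 = condProb P E2 H2 :=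
    conjPrev_subset P hE2 hH2 h2 hH3 h3 hsub
  have hx3 : condProb P E3 H3 = 1 := condProb_of_subset P hsub h3
  by_cases m3 : ω ∈ H3
  · have e3 : ω ∈ E3 := hsub m3
    by_cases e1 : ω ∈ E1 <;> by_cases e2 : ω ∈ E2 <;>
      by_cases m1 : ω ∈ H1 <;> by_cases m2 : ω ∈ H2 <;>
        simp_all [c3base, conjCE, condEvent, ind, Set.indicator_apply,
          Set.mem_inter_iff, Set.mem_union, Set.mem_compl_iff, Set.mem_empty_iff_false,
          min_eq_left (condProb_le_one P E1 H1), min_eq_right (condProb_le_one P E2 H2),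
          min_eq_left (condProb_nonneg P E2 H2), min_eq_right (condProb_nonneg P E1 H1),
          min_eq_left (zero_le_one' ℝ), min_eq_right (zero_le_one' ℝ)]
  · by_cases e1 : ω ∈ E1 <;> by_cases e2 : ω ∈ E2 <;>
      by_cases m1 : ω ∈ H1 <;> by_cases m2 : ω ∈ H2 <;>
        simp_all [c3base, conjCE, condEvent, ind, Set.indicator_apply,
          Set.mem_inter_iff, Set.mem_union, Set.mem_compl_iff, Set.mem_empty_iff_false,
          min_eq_left (condProb_le_one P E1 H1), min_eq_right (condProb_le_one P E2 H2),
          min_eq_left (condProb_nonneg P E2 H2), min_eq_right (condProb_nonneg P E1 H1),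
          min_eq_left (zero_le_one' ℝ), min_eq_right (zero_le_one' ℝ)]

end Aux

/-- Main theorem, case `H3 ⊆ E3`: the triple conjunction `C3` coincides
pointwise with `C12 = ⟦(E1|H1)∧(E2|H2)⟧` and `x123 = x12`; consequently, if
`x12 > 0`, the iterated conditional `⟦(E3|H3)|((E1|H1)∧(E2|H2))⟧` is
constantly `1`. -/
theorem main_case_subset (P : Measure Ω) [IsProbabilityMeasure P]
    (E1 H1 E2 H2 E3 H3 : Set Ω)
    (hE1 : MeasurableSet E1) (hH1 : MeasurableSet H1)
    (hE2 : MeasurableSet E2) (hH2 : MeasurableSet H2)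
    (hE3 : MeasurableSet E3) (hH3 : MeasurableSet H3)
    (h1 : 0 < P H1) (h2 : 0 < P H2) (h3 : 0 < P H3)
    (hsub : H3 ⊆ E3) :
    (∀ ω, c3 P E1 H1 E2 H2 E3 H3 ω = conjCE P E1 H1 E2 H2 ω) ∧
      x123 P E1 H1 E2 H2 E3 H3 = conjPrev P E1 H1 E2 H2 ∧
      (0 < conjPrev P E1 H1 E2 H2 →
        ∀ ω, iter3 P E1 H1 E2 H2 E3 H3 ω = 1) := by
  have t3pos : (0:ℝ) < (P (H1 ∪ H2 ∪ H3)).toReal :=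
    ENNReal.toReal_pos (lt_of_lt_of_le h1
      (measure_mono (subset_union_left.trans subset_union_left))).ne' (measure_ne_top _ _)
  have t2ne : (P (H1 ∪ H2)).toReal ≠ 0 :=
    (ENNReal.toReal_pos (lt_of_lt_of_le h1 (measure_mono subset_union_left)).ne'
      (measure_ne_top _ _)).ne'
  -- integrability facts
  have hminInt : Integrable (fun ω => min (condEvent P E1 H1 ω) (condEvent P E2 H2 ω)) P := by
    have := (integrable_ce P hE1 hH1).inf (integrable_ce P hE2 hH2)
    exact this
  have hIa : Integrable
      (fun ω => min (condEvent P E1 H1 ω) (condEvent P E2 H2 ω) * ind (H1 ∪ H2) ω) P := by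
    have heq : (fun ω => min (condEvent P E1 H1 ω) (condEvent P E2 H2 ω) * ind (H1 ∪ H2) ω)
        = (H1 ∪ H2).indicator
            (fun ω => min (condEvent P E1 H1 ω) (condEvent P E2 H2 ω)) := by
      funext ω
      by_cases h : ω ∈ H1 ∪ H2
      · rw [ind_mem h, mul_one, indicator_of_mem h]
      · rw [ind_nmem h, mul_zero, indicator_of_notMem h]
    rw [heq]
    exact hminInt.indicator (hH1.union hH2)
  have hIb : Integrable
      (fun ω => conjPrev P E1 H1 E2 H2 * ind (H3 \ (H1 ∪ H2)) ω) P :=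
    (integrable_ind P (hH3.diff (hH1.union hH2))).const_mul _
  -- pointwise identity for the integrand of x123
  have hpt : ∀ ω, c3base P E1 H1 E2 H2 E3 H3 ω * ind (H1 ∪ H2 ∪ H3) ω
      = min (condEvent P E1 H1 ω) (condEvent P E2 H2 ω) * ind (H1 ∪ H2) ω
        + conjPrev P E1 H1 E2 H2 * ind (H3 \ (H1 ∪ H2)) ω := by
    intro ω
    by_cases hU : ω ∈ H1 ∪ H2 ∪ H3
    · have hω : ω ∈ H1 ∨ ω ∈ H2 ∨ ω ∈ H3 := by
        simpa [Set.mem_union, or_assoc] using hU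
      rw [ind_mem hU, mul_one,
        c3base_eq_conjCE P hE1 hH1 hE2 hH2 hE3 hH3 h1 h2 h3 hsub hω]
      by_cases h12 : ω ∈ H1 ∪ H2
      · simp only [conjCE]
        rw [ind_mem h12, ind_nmem (show ω ∉ (H1 ∪ H2)ᶜ from fun hc => hc h12),
          ind_nmem (show ω ∉ H3 \ (H1 ∪ H2) from fun h => h.2 h12)]
      · have hm3 : ω ∈ H3 := hU.resolve_left h12
        simp only [conjCE]
        rw [ind_nmem h12, ind_mem (show ω ∈ (H1 ∪ H2)ᶜ from h12),
          ind_mem (show ω ∈ H3 \ (H1 ∪ H2) from ⟨hm3, h12⟩)]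
    · have h12 : ω ∉ H1 ∪ H2 := fun h => hU (Or.inl h)
      have h3' : ω ∉ H3 \ (H1 ∪ H2) := fun h => hU (Or.inr h.1)
      rw [ind_nmem hU, mul_zero, ind_nmem h12, ind_nmem h3']
      ring
  -- the integral of the first piece is x12 · P(H1 ∪ H2)
  have hIval : ∫ ω, min (condEvent P E1 H1 ω) (condEvent P E2 H2 ω) * ind (H1 ∪ H2) ω ∂P
      = conjPrev P E1 H1 E2 H2 * (P (H1 ∪ H2)).toReal := by
    rw [conjPrev, div_mul_cancel₀ _ t2ne]
  -- measure splitting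
  have hsplit : (P (H1 ∪ H2 ∪ H3)).toReal
      = (P (H1 ∪ H2)).toReal + (P (H3 \ (H1 ∪ H2))).toReal := by
    rw [← ENNReal.toReal_add (measure_ne_top _ _) (measure_ne_top _ _),
      ← measure_union disjoint_sdiff_right (hH3.diff (hH1.union hH2)), union_diff_self]
  -- x123 = x12
  have hx : x123 P E1 H1 E2 H2 E3 H3 = conjPrev P E1 H1 E2 H2 := by
    unfold x123
    rw [show (fun ω => c3base P E1 H1 E2 H2 E3 H3 ω * ind (H1 ∪ H2 ∪ H3) ω)
        = fun ω => min (condEvent P E1 H1 ω) (condEvent P E2 H2 ω) * ind (H1 ∪ H2) ω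
          + conjPrev P E1 H1 E2 H2 * ind (H3 \ (H1 ∪ H2)) ω from funext hpt,
      integral_add hIa hIb, hIval, integral_const_mul,
      integral_ind P (hH3.diff (hH1.union hH2)), ← mul_add, ← hsplit,
      mul_div_assoc, div_self t3pos.ne', mul_one]
  -- pointwise equality of C3 and C12
  have hc3 : ∀ ω, c3 P E1 H1 E2 H2 E3 H3 ω = conjCE P E1 H1 E2 H2 ω := by
    intro ω
    by_cases h : ω ∈ H1ᶜ ∩ H2ᶜ ∩ H3ᶜ
    · have h12 : ω ∉ H1 ∪ H2 := fun hh => hh.elim h.1.1 h.1.2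
      simp only [c3]
      rw [if_pos h, hx]
      simp only [conjCE]
      rw [ind_nmem h12, ind_mem (show ω ∈ (H1 ∪ H2)ᶜ from h12), mul_zero, zero_add, mul_one]
    · have hω : ω ∈ H1 ∨ ω ∈ H2 ∨ ω ∈ H3 := by
        by_contra hc
        push_neg at hc
        exact h ⟨⟨hc.1, hc.2.1⟩, hc.2.2⟩
      simp only [c3]
      rw [if_neg h]
      exact c3base_eq_conjCE P hE1 hH1 hE2 hH2 hE3 hH3 h1 h2 h3 hsub hω
  refine ⟨hc3, hx, ?_⟩
  intro hpos ω
  simp only [iter3]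
  rw [hc3 ω, hx, div_self hpos.ne']
  ring

end
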